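/- Pythagorean relation: for discrete probability measures μ = Σ a_i δ_{x_i}, ν = Σ b_j δ_{y_j} on R^n with means x̄, ȳ, one has W₂²(μ, ν) = ‖x̄ − ȳ‖₂² + RW₂²(μ, ν), where RW₂²(μ,ν) = min over s of W₂²(translate of μ by s, ν). -/

import Mathlib

open Finset

noncomputable section

/-- The transportation polytope `Π(a,b)`. -/
def transportPolytope {m1 m2 : ℕ} (a : Fin m1 → ℝ) (b : Fin m2 → ℝ) :
    Set (Fin m1 → Fin m2 → ℝ) :=
  {P | (∀ i j, 0 ≤ P i j) ∧ (∀ i, ∑ j, P i j = a i) ∧ (∀ j, ∑ i, P i j = b j)}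

/-- The translated quadratic transport cost `H(P, s)`. -/
def Hcost {n m1 m2 : ℕ} (x : Fin m1 → EuclideanSpace ℝ (Fin n))
    (y : Fin m2 → EuclideanSpace ℝ (Fin n)) (P : Fin m1 → Fin m2 → ℝ)
    (s : EuclideanSpace ℝ (Fin n)) : ℝ :=
  ∑ i, ∑ j, ‖x i + s - y j‖ ^ 2 * P i j

/-- The (untranslated) quadratic transport cost `E(P)`. -/
def Ecost {n m1 m2 : ℕ} (x : Fin m1 → EuclideanSpace ℝ (Fin n))
    (y : Fin m2 → EuclideanSpace ℝ (Fin n)) (P : Fin m1 → Fin m2 → ℝ) : ℝ :=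
  ∑ i, ∑ j, ‖x i - y j‖ ^ 2 * P i j

end

/-- The minimal quadratic transport cost (squared `W₂` distance) between the
discrete measures `∑ aᵢ δ_{xᵢ}` and `∑ bⱼ δ_{yⱼ}`. -/
noncomputable def OT2 {n m1 m2 : ℕ} (a : Fin m1 → ℝ) (b : Fin m2 → ℝ)
    (x : Fin m1 → EuclideanSpace ℝ (Fin n)) (y : Fin m2 → EuclideanSpace ℝ (Fin n)) : ℝ :=
  sInf {c : ℝ | ∃ P ∈ transportPolytope a b, c = Ecost x y P}

open RealInnerProductSpace in
lemma ecost_shift_aux {n m1 m2 : ℕ}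
    (x : Fin m1 → EuclideanSpace ℝ (Fin n)) (y : Fin m2 → EuclideanSpace ℝ (Fin n))
    (a : Fin m1 → ℝ) (b : Fin m2 → ℝ)
    (hsa : ∑ i, a i = 1) (hsb : ∑ j, b j = 1)
    (s : EuclideanSpace ℝ (Fin n)) {P : Fin m1 → Fin m2 → ℝ}
    (hP : P ∈ transportPolytope a b) :
    Ecost (fun i => x i + s) y P
      = Ecost x y P
        + (2 * ⟪(∑ i, a i • x i) - ∑ j, b j • y j, s⟫ + ‖s‖ ^ 2) := by
  obtain ⟨hpos, hrow, hcol⟩ := hP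
  have h1 : ∀ i j, ‖x i + s - y j‖ ^ 2
      = ‖x i - y j‖ ^ 2 + (2 * ⟪x i, s⟫ - 2 * ⟪y j, s⟫ + ‖s‖ ^ 2) := by
    intro i j
    have e : x i + s - y j = (x i - y j) + s := by abel
    rw [e, norm_add_sq_real, inner_sub_left]
    ring
  have hA : ∑ i, ∑ j, ⟪x i, s⟫ * P i j = ⟪(∑ i, a i • x i), s⟫ := by
    rw [sum_inner]
    refine Finset.sum_congr rfl fun i _ => ?_
    rw [← Finset.mul_sum, hrow i, real_inner_smul_left, mul_comm]
  have hB : ∑ i, ∑ j, ⟪y j, s⟫ * P i j = ⟪(∑ j, b j • y j), s⟫ := by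
    rw [Finset.sum_comm, sum_inner]
    refine Finset.sum_congr rfl fun j _ => ?_
    rw [← Finset.mul_sum, hcol j, real_inner_smul_left, mul_comm]
  have hT : ∑ i, ∑ j, P i j = 1 := by
    rw [← hsa]; exact Finset.sum_congr rfl fun i _ => hrow i
  simp only [Ecost, h1, add_mul, sub_mul, Finset.sum_add_distrib, Finset.sum_sub_distrib]
  rw [inner_sub_left]
  have h2 : ∑ i, ∑ j, 2 * ⟪x i, s⟫ * P i j = 2 * ⟪(∑ i, a i • x i), s⟫ := by
    rw [← hA, Finset.mul_sum]
    exact Finset.sum_congr rfl fun i _ => by rw [Finset.mul_sum]; exact Finset.sum_congr rfl fun j _ => by ring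
  have h3 : ∑ i, ∑ j, 2 * ⟪y j, s⟫ * P i j = 2 * ⟪(∑ j, b j • y j), s⟫ := by
    rw [← hB, Finset.mul_sum]
    exact Finset.sum_congr rfl fun i _ => by rw [Finset.mul_sum]; exact Finset.sum_congr rfl fun j _ => by ring
  have h4 : ∑ i, ∑ j, ‖s‖ ^ 2 * P i j = ‖s‖ ^ 2 := by
    simp only [← Finset.mul_sum]; rw [hT, mul_one]
  rw [h2, h3, h4]; ring

/-- Pythagorean relation: `W₂²(μ,ν) = ‖x̄ − ȳ‖² + RW₂²(μ,ν)`, where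
`RW₂²(μ,ν) = min_s W₂²(μ translated by s, ν)`. -/
theorem stmt9 {n m1 m2 : ℕ}
    (x : Fin m1 → EuclideanSpace ℝ (Fin n)) (y : Fin m2 → EuclideanSpace ℝ (Fin n))
    (a : Fin m1 → ℝ) (b : Fin m2 → ℝ)
    (ha0 : ∀ i, 0 ≤ a i) (hb0 : ∀ j, 0 ≤ b j)
    (hsa : ∑ i, a i = 1) (hsb : ∑ j, b j = 1) :
    OT2 a b x y
      = ‖(∑ i, a i • x i) - ∑ j, b j • y j‖ ^ 2
        + ⨅ s : EuclideanSpace ℝ (Fin n), OT2 a b (fun i => x i + s) y := by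
  classical
  set d : EuclideanSpace ℝ (Fin n) := (∑ i, a i • x i) - ∑ j, b j • y j with hd
  set S : Set ℝ := {c : ℝ | ∃ P ∈ transportPolytope a b, c = Ecost x y P} with hS
  have hne : S.Nonempty := by
    refine ⟨Ecost x y (fun i j => a i * b j), ⟨fun i j => a i * b j, ⟨fun i j => mul_nonneg (ha0 i) (hb0 j), fun i => by rw [← Finset.mul_sum, hsb, mul_one], fun j => by rw [← Finset.sum_mul, hsa, one_mul]⟩, rfl⟩⟩
  have hbdd : BddBelow S := by
    refine ⟨0, ?_⟩
    rintro c ⟨P, hP, rfl⟩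
    exact Finset.sum_nonneg fun i _ => Finset.sum_nonneg fun j _ =>
      mul_nonneg (sq_nonneg _) (hP.1 i j)
  have hshift : ∀ s : EuclideanSpace ℝ (Fin n),
      OT2 a b (fun i => x i + s) y
        = OT2 a b x y + (2 * (inner ℝ d s : ℝ) + ‖s‖ ^ 2) := by
    intro s
    have hset : {c : ℝ | ∃ P ∈ transportPolytope a b, c = Ecost (fun i => x i + s) y P}
        = (fun c => c + (2 * (inner ℝ d s : ℝ) + ‖s‖ ^ 2)) '' S := by
      ext c
      constructor
      · rintro ⟨P, hP, rfl⟩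
        exact ⟨Ecost x y P, ⟨P, hP, rfl⟩,
          (ecost_shift_aux x y a b hsa hsb s hP).symm⟩
      · rintro ⟨c, ⟨P, hP, rfl⟩, rfl⟩
        exact ⟨P, hP, (ecost_shift_aux x y a b hsa hsb s hP).symm⟩
    have hmono : Monotone (fun c : ℝ => c + (2 * (inner ℝ d s : ℝ) + ‖s‖ ^ 2)) :=
      fun u v huv => by simpa using huv
    have := (hmono.map_csInf_of_continuousAt
      (continuous_id.add continuous_const).continuousAt hne hbdd).symm
    rw [OT2, hset]
    exact this
  have hquad : ∀ s : EuclideanSpace ℝ (Fin n),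
      2 * (inner ℝ d s : ℝ) + ‖s‖ ^ 2 = ‖d + s‖ ^ 2 - ‖d‖ ^ 2 := by
    intro s; rw [norm_add_sq_real]; ring
  have hrbdd : BddBelow (Set.range fun s : EuclideanSpace ℝ (Fin n) =>
      OT2 a b (fun i => x i + s) y) := by
    refine ⟨OT2 a b x y - ‖d‖ ^ 2, ?_⟩
    rintro _ ⟨s, rfl⟩
    show OT2 a b x y - ‖d‖ ^ 2 ≤ OT2 a b (fun i => x i + s) y
    rw [hshift s, hquad s]
    have := sq_nonneg ‖d + s‖
    linarith
  have hinf : (⨅ s : EuclideanSpace ℝ (Fin n), OT2 a b (fun i => x i + s) y)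
      = OT2 a b x y - ‖d‖ ^ 2 := by
    refine le_antisymm ?_ ?_
    · have h := ciInf_le hrbdd (-d)
      rw [hshift (-d), hquad (-d)] at h
      have h0 : d + -d = (0 : EuclideanSpace ℝ (Fin n)) := by abel
      rw [h0, norm_zero] at h
      linarith
    · refine le_ciInf fun s => ?_
      show OT2 a b x y - ‖d‖ ^ 2 ≤ OT2 a b (fun i => x i + s) y
      rw [hshift s, hquad s]
      have := sq_nonneg ‖d + s‖
      linarith
  rw [hinf]
  ring
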